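/- arXiv:1708.02064 — 3 statements merged into one kernel-verified Lean document; each statement's English description precedes it below -/
import Mathlib

section
/- Let n be a positive integer, λ an infinite cardinal, and τ a shift-continuous T₁ topology on the semigroup I_λ^n (i.e., all left and right translations x ↦ ax and x ↦ xa are continuous). Then for every α ∈ I_λ^n the up-set ↑α = {β : α ≼ β} is both open and closed in (I_λ^n, τ). -/
open Set Topology

universe v

namespace ISemi

/-- The set of partial injective transformations (partial bijections) of `ι`
with rank (cardinality of the range, equivalently of the domain) at most `n`. -/
def Elem (ι : Type*) (n : ℕ) : Type _ :=
  {f : ι ≃. ι // {a : ι | (f a).isSome}.encard ≤ (n : ℕ∞)}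

variable {ι : Type*} {n : ℕ}

/-- Composition of partial bijections (written multiplicatively). -/
instance : Semigroup (Elem ι n) where
  mul f g := ⟨f.1.trans g.1, by
    refine le_trans (Set.encard_mono ?_) f.2
    intro a ha
    simp only [Set.mem_setOf_eq] at *
    rcases Option.isSome_iff_exists.1 ha with ⟨c, hc⟩
    rcases (PEquiv.trans_eq_some _ _ _ _).1 hc with ⟨b, hb, -⟩
    simp [hb]⟩
  mul_assoc f g h := Subtype.ext (PEquiv.trans_assoc f.1 g.1 h.1)

/-- The inverse partial bijection. -/
def inv (f : Elem ι n) : Elem ι n := ⟨f.1.symm, by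
  have key : ∀ (g : ι ≃. ι), {b : ι | (g.symm b).isSome} ⊆
      (fun p : {a : ι | (g a).isSome} => (g p.1).get p.2) '' Set.univ := by
    intro g b hb
    rcases Option.isSome_iff_exists.1 hb with ⟨a, ha⟩
    have ha' : b ∈ g a := (PEquiv.mem_iff_mem g).1 (Option.mem_def.2 ha)
    simp only [Option.mem_def] at ha'
    refine ⟨⟨a, ?_⟩, Set.mem_univ _, ?_⟩
    · simp [Set.mem_setOf_eq, ha']
    · simp [ha']
  calc {b : ι | (f.1.symm b).isSome}.encard
      ≤ ((fun p : {a : ι | (f.1 a).isSome} => (f.1 p.1).get p.2) '' Set.univ).encard :=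
        Set.encard_mono (key f.1)
    _ ≤ (Set.univ : Set {a : ι | (f.1 a).isSome}).encard := Set.encard_image_le _ _
    _ = {a : ι | (f.1 a).isSome}.encard := by rw [Set.encard_univ]; rfl
    _ ≤ (n : ℕ∞) := f.2⟩

/-- The zero (the empty partial map). -/
def zero (ι : Type*) (n : ℕ) : Elem ι n := ⟨⊥, by simp [PEquiv.bot_apply]⟩

/-- idempotents -/
def IsIdem (e : Elem ι n) : Prop := e * e = e

/-- The natural partial order on the inverse semigroup `Elem ι n`:
`f ≼ g` iff `f = e * g` for some idempotent `e`. -/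
def nle (f g : Elem ι n) : Prop := ∃ e : Elem ι n, IsIdem e ∧ f = e * g

/-- up-set of `f` w.r.t. the natural partial order -/
def upset (f : Elem ι n) : Set (Elem ι n) := {g | nle f g}

/-- the rank of a partial bijection: the cardinality of its domain (= range) -/
noncomputable def rank (f : Elem ι n) : ℕ∞ := {a : ι | (f.1 a).isSome}.encard

def dom (f : Elem ι n) : Set ι := {a : ι | (f.1 a).isSome}

def ran (f : Elem ι n) : Set ι := {b : ι | (f.1.symm b).isSome}

/-- A topology on `Elem ι n` is shift-continuous if all left and right
translations are continuous. -/
def ShiftContinuous (ι : Type*) (n : ℕ) [TopologicalSpace (Elem ι n)] : Prop :=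
  ∀ a : Elem ι n, Continuous (fun x : Elem ι n => a * x) ∧
    Continuous (fun x : Elem ι n => x * a)

/-- A space is feebly compact if every locally finite family of nonempty open
sets is finite. -/
def FeeblyCompact (X : Type*) [TopologicalSpace X] : Prop :=
  ∀ 𝒰 : Set (Set X), (∀ U ∈ 𝒰, IsOpen U ∧ U.Nonempty) →
    LocallyFinite (fun U : 𝒰 => (U : Set X)) → 𝒰.Finite

/-- A space is `d`-feebly compact if every discrete family of open sets is
finite; a family is discrete if every point has a neighbourhood meeting at
most one member of the family. -/
def DFeeblyCompact (X : Type*) [TopologicalSpace X] : Prop :=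
  ∀ 𝒰 : Set (Set X), (∀ U ∈ 𝒰, IsOpen U) →
    (∀ x : X, ∃ V ∈ 𝓝 x, {U ∈ 𝒰 | (U ∩ V).Nonempty}.Subsingleton) → 𝒰.Finite

/-- countably pracompact: there is a dense set `A` such that every infinite
subset of `A` has an accumulation point in `X`. -/
def CountablyPracompact (X : Type*) [TopologicalSpace X] : Prop :=
  ∃ A : Set X, Dense A ∧ ∀ B ⊆ A, B.Infinite → ∃ x : X, AccPt x (Filter.principal B)

/-- H-closed: closed in every Hausdorff space in which it embeds. -/
def HClosed (X : Type*) [TopologicalSpace X] : Prop :=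
  ∀ (Y : Type v) (_ : TopologicalSpace Y), T2Space Y →
    ∀ e : X → Y, IsEmbedding e → IsClosed (Set.range e)

/-- infra H-closed: every continuous image in a first-countable Hausdorff
space is closed. -/
def InfraHClosed (X : Type*) [TopologicalSpace X] : Prop :=
  ∀ (Y : Type v) (_ : TopologicalSpace Y), T2Space Y →
    FirstCountableTopology Y → ∀ f : X → Y, Continuous f → IsClosed (Set.range f)

/-- `Y`-compactness: every continuous image in `Y` is compact. -/
def YCompact (X : Type*) [TopologicalSpace X] (Y : Type*) [TopologicalSpace Y] : Prop :=
  ∀ f : X → Y, Continuous f → IsCompact (Set.range f)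

/-- scattered: every nonempty subset has a point isolated in it. -/
def Scattered (X : Type*) [TopologicalSpace X] : Prop :=
  ∀ S : Set X, S.Nonempty → ∃ x ∈ S, ∃ U : Set X, IsOpen U ∧ U ∩ S = {x}

/-- semiregular: there is a base consisting of regular open sets. -/
def Semiregular (X : Type*) [TopologicalSpace X] : Prop :=
  ∃ B : Set (Set X), TopologicalSpace.IsTopologicalBasis B ∧
    ∀ U ∈ B, interior (closure U) = U

/-- countably compact: every countable open cover has a finite subcover. -/
def CountablyCompact (X : Type*) [TopologicalSpace X] : Prop :=
  ∀ 𝒰 : Set (Set X), 𝒰.Countable → (∀ U ∈ 𝒰, IsOpen U) → ⋃₀ 𝒰 = Set.univ →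
    ∃ 𝒱 ⊆ 𝒰, 𝒱.Finite ∧ ⋃₀ 𝒱 = Set.univ

end ISemi

section Aux

open ISemi

variable {ι : Type*} {n : ℕ}

lemma ISemi.mul_fst (f g : Elem ι n) : (f * g).1 = f.1.trans g.1 := rfl

lemma ISemi.idem_fix {e : Elem ι n} (he : IsIdem e) {x z : ι}
    (h : e.1 x = some z) : z = x := by
  have h2 : (e * e).1 x = e.1 x := by rw [he]
  rw [mul_fst] at h2
  have : e.1.trans e.1 x = some z := by rw [h2, h]
  rcases (PEquiv.trans_eq_some _ _ _ _).1 this with ⟨b, hb1, hb2⟩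
  rw [h] at hb1
  injection hb1 with hb1
  subst hb1
  exact PEquiv.inj e.1 (Option.mem_def.2 hb2) (Option.mem_def.2 h)

lemma ISemi.mem_upset_iff {a β : Elem ι n} :
    β ∈ upset a ↔ ∀ x y : ι, a.1 x = some y → β.1 x = some y := by
  constructor
  · rintro ⟨e, he, hae⟩ x y hxy
    rw [hae, mul_fst] at hxy
    rcases (PEquiv.trans_eq_some _ _ _ _).1 hxy with ⟨z, hz1, hz2⟩
    rwa [idem_fix he hz1] at hz2
  · intro h
    refine ⟨a * inv a, ?_, ?_⟩
    · show a * inv a * (a * inv a) = a * inv a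
      apply Subtype.ext
      show ((a.1.trans a.1.symm).trans (a.1.trans a.1.symm)) = a.1.trans a.1.symm
      apply PEquiv.ext
      intro x
      show ((a.1.trans a.1.symm) x).bind (a.1.trans a.1.symm) = (a.1.trans a.1.symm) x
      cases hax : a.1 x with
      | none =>
        have : a.1.trans a.1.symm x = none := by
          show (a.1 x).bind a.1.symm = none
          rw [hax]; rfl
        rw [this]; rfl
      | some y =>
        have hsy : a.1.symm y = some x := (PEquiv.eq_some_iff a.1).2 hax
        have hxx : a.1.trans a.1.symm x = some x := by
          show (a.1 x).bind a.1.symm = some x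
          rw [hax]; exact hsy
        rw [hxx]
        show a.1.trans a.1.symm x = _
        rw [hxx]
    · apply Subtype.ext
      rw [mul_fst, mul_fst]
      apply PEquiv.ext
      intro x
      show a.1 x = ((a.1.trans a.1.symm) x).bind β.1
      cases hax : a.1 x with
      | none =>
        have : a.1.trans a.1.symm x = none := by
          show (a.1 x).bind a.1.symm = none
          rw [hax]; rfl
        rw [this]; rfl
      | some y =>
        have hsy : a.1.symm y = some x := (PEquiv.eq_some_iff a.1).2 hax
        have hxx : a.1.trans a.1.symm x = some x := by
          show (a.1 x).bind a.1.symm = some x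
          rw [hax]; exact hsy
        rw [hxx]
        exact (h x y hax).symm

end Aux

section Aux2

open ISemi

variable {ι : Type*} {n : ℕ}

lemma ISemi.clopen_eval [TopologicalSpace (Elem ι n)] [T1Space (Elem ι n)]
    (hshift : ShiftContinuous ι n) (hn : 0 < n) (x y : ι) :
    IsOpen {β : Elem ι n | β.1 x = some y} ∧
      IsClosed {β : Elem ι n | β.1 x = some y} := by
  classical
  have hb : ∀ u v : ι, {a : ι | ((PEquiv.single u v) a).isSome}.encard ≤ (n : ℕ∞) := by
    intro u v
    have hset : {a : ι | ((PEquiv.single u v) a).isSome} = {u} := by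
      ext a
      simp only [Set.mem_setOf_eq, Set.mem_singleton_iff]
      constructor
      · intro h
        by_contra hne
        rw [PEquiv.single_apply_of_ne (Ne.symm hne)] at h
        simp at h
      · rintro rfl
        simp
    rw [hset, Set.encard_singleton]
    exact_mod_cast hn
  set exx : Elem ι n := ⟨PEquiv.single x x, hb x x⟩ with hexx
  set eyy : Elem ι n := ⟨PEquiv.single y y, hb y y⟩ with heyy
  set sxy : Elem ι n := ⟨PEquiv.single x y, hb x y⟩ with hsxy
  set φ : Elem ι n → Elem ι n := fun β => exx * β * eyy with hφ
  have hφcont : Continuous φ := (hshift eyy).2.comp (hshift exx).1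
  have key1 : ∀ β : Elem ι n, β.1 x = some y → φ β = sxy := by
    intro β h
    apply Subtype.ext
    show ((PEquiv.single x x).trans β.1).trans (PEquiv.single y y) = PEquiv.single x y
    rw [PEquiv.single_trans_of_mem x (Option.mem_def.2 h),
      PEquiv.single_trans_of_mem x (PEquiv.mem_single y y)]
  have key2 : ∀ β : Elem ι n, β.1 x ≠ some y → φ β = zero ι n := by
    intro β h
    apply Subtype.ext
    apply PEquiv.ext
    intro a
    show (((PEquiv.single x x) a).bind β.1).bind (PEquiv.single y y) = none
    by_cases hax : a = x
    · subst hax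
      rw [PEquiv.single_apply, Option.bind_some]
      cases hba : β.1 a with
      | none => rfl
      | some z =>
        rw [Option.bind_some]
        have hzy : y ≠ z := fun hzy => h (by rw [hba, hzy])
        exact PEquiv.single_apply_of_ne hzy y
    · rw [PEquiv.single_apply_of_ne (Ne.symm hax)]
      rfl
  have hne : sxy ≠ zero ι n := by
    intro h
    have := congrArg (fun f : Elem ι n => f.1 x) h
    simp only [hsxy] at this
    rw [show ((zero ι n).1 : ι ≃. ι) x = none from rfl] at this
    rw [PEquiv.single_apply] at this
    simp at this
  have hSc : {β : Elem ι n | β.1 x = some y} = φ ⁻¹' {sxy} := by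
    ext β
    simp only [Set.mem_setOf_eq, Set.mem_preimage, Set.mem_singleton_iff]
    constructor
    · exact key1 β
    · intro h
      by_contra hc
      rw [key2 β hc] at h
      exact hne h.symm
  have hSo : {β : Elem ι n | β.1 x = some y} = φ ⁻¹' {zero ι n}ᶜ := by
    ext β
    simp only [Set.mem_setOf_eq, Set.mem_preimage, Set.mem_compl_iff,
      Set.mem_singleton_iff]
    constructor
    · intro h hz
      rw [key1 β h] at hz
      exact hne hz
    · intro h
      by_contra hc
      exact h (key2 β hc)
  constructor
  · rw [hSo]
    exact (isClosed_singleton.isOpen_compl).preimage hφcont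
  · rw [hSc]
    exact isClosed_singleton.preimage hφcont

end Aux2

theorem stmt5 (ι : Type*) [Infinite ι] (n : ℕ) (hn : 0 < n)
    [TopologicalSpace (ISemi.Elem ι n)] [T1Space (ISemi.Elem ι n)]
    (hshift : ISemi.ShiftContinuous ι n) (a : ISemi.Elem ι n) :
    IsOpen (ISemi.upset a) ∧ IsClosed (ISemi.upset a) := by
  classical
  have hfin : (ISemi.dom a).Finite := by
    rw [← Set.encard_ne_top_iff]
    exact (lt_of_le_of_lt a.2 (WithTop.coe_lt_top n)).ne
  have hup : ISemi.upset a =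
      ⋂ x ∈ ISemi.dom a, {β : ISemi.Elem ι n | β.1 x = a.1 x} := by
    ext β
    simp only [Set.mem_iInter, Set.mem_setOf_eq]
    constructor
    · intro h x hx
      have h := ISemi.mem_upset_iff.1 h
      rcases Option.isSome_iff_exists.1 (show (a.1 x).isSome from hx) with ⟨y, hy⟩
      rw [hy]
      exact h x y hy
    · intro h
      apply ISemi.mem_upset_iff.2
      intro x y hxy
      have hx : x ∈ ISemi.dom a := by
        show (a.1 x).isSome
        rw [hxy]; rfl
      have := h x hx
      rwa [hxy] at this
  constructor
  · rw [hup]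
    refine hfin.isOpen_biInter fun x hx => ?_
    rcases Option.isSome_iff_exists.1 (show (a.1 x).isSome from hx) with ⟨y, hy⟩
    rw [hy]
    exact (ISemi.clopen_eval hshift hn x y).1
  · rw [hup]
    refine isClosed_biInter fun x hx => ?_
    rcases Option.isSome_iff_exists.1 (show (a.1 x).isSome from hx) with ⟨y, hy⟩
    rw [hy]
    exact (ISemi.clopen_eval hshift hn x y).2
end

section
/- Let n be a positive integer, λ an infinite cardinal, and τ a shift-continuous T₁ topology on I_λ^n. Then (I_λ^n, τ) is totally disconnected: every connected component is a singleton. -/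
open Set Topology

universe v

namespace ISemi

variable {ι : Type*} {n : ℕ}

/-! Auxiliary lemmas for stmt7 -/

lemma mul_val (f g : Elem ι n) : (f * g).1 = f.1.trans g.1 := rfl

lemma eps_spec (α : Elem ι n) (a b : ι) :
    (α * inv α).1 a = some b ↔ b = a ∧ (α.1 b).isSome := by
  classical
  rw [mul_val]
  show α.1.trans α.1.symm a = some b ↔ _
  rw [PEquiv.self_trans_symm, PEquiv.ofSet_eq_some_iff]
  rfl

lemma eps'_spec (α : Elem ι n) (a b : ι) :
    (inv α * α).1 a = some b ↔ b = a ∧ (α.1.symm b).isSome := by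
  classical
  rw [mul_val]
  show α.1.symm.trans α.1 a = some b ↔ _
  rw [PEquiv.symm_trans_self, PEquiv.ofSet_eq_some_iff]
  rfl

lemma T_spec (α x : Elem ι n) (a b : ι) :
    ((α * inv α) * x * (inv α * α)).1 a = some b ↔
      (α.1 a).isSome ∧ (α.1.symm b).isSome ∧ x.1 a = some b := by
  constructor
  · intro h
    rw [mul_val, PEquiv.trans_eq_some] at h
    obtain ⟨c, h1, h2⟩ := h
    rw [mul_val, PEquiv.trans_eq_some] at h1
    obtain ⟨d, h3, h4⟩ := h1
    obtain ⟨rfl, hd⟩ := (eps_spec α a d).1 h3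
    obtain ⟨rfl, hc⟩ := (eps'_spec α c b).1 h2
    exact ⟨hd, hc, h4⟩
  · rintro ⟨h1, h2, h3⟩
    rw [mul_val, PEquiv.trans_eq_some]
    refine ⟨b, ?_, (eps'_spec α b b).2 ⟨rfl, h2⟩⟩
    rw [mul_val, PEquiv.trans_eq_some]
    exact ⟨a, (eps_spec α a a).2 ⟨rfl, h1⟩, h3⟩

lemma T_fixed (α : Elem ι n) : (α * inv α) * α * (inv α * α) = α := by
  apply Subtype.ext; apply PEquiv.ext; intro a
  cases h : α.1 a with
  | some b =>
      exact (T_spec α α a b).2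
        ⟨by simp [h], Option.isSome_iff_exists.2 ⟨a, (PEquiv.eq_some_iff α.1).2 h⟩, h⟩
  | none =>
      rw [Option.eq_none_iff_forall_not_mem]
      intro b hb
      have := ((T_spec α α a b).1 (Option.mem_def.1 hb)).2.2
      rw [h] at this
      cases this

lemma eq_of_T (α β : Elem ι n)
    (h1 : (α * inv α) * β * (inv α * α) = α)
    (h2 : (β * inv β) * α * (inv β * β) = β) : α = β := by
  apply Subtype.ext; apply PEquiv.ext; intro a
  cases hα : α.1 a with
  | some b =>
      have hb : ((α * inv α) * β * (inv α * α)).1 a = some b := by rw [h1]; exact hα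
      exact (((T_spec α β a b).1 hb).2.2).symm
  | none =>
      cases hβ : β.1 a with
      | none => rfl
      | some b =>
          have hb : ((β * inv β) * α * (inv β * β)).1 a = some b := by rw [h2]; exact hβ
          have := ((T_spec β α a b).1 hb).2.2
          rw [hα] at this
          cases this

lemma finite_fiberset (α : Elem ι n) :
    {g : Elem ι n | ∀ a b, g.1 a = some b →
      (α.1 a).isSome ∧ (α.1.symm b).isSome}.Finite := by
  set S := {g : Elem ι n | ∀ a b, g.1 a = some b →
      (α.1 a).isSome ∧ (α.1.symm b).isSome} with hS
  have hdom : {a : ι | (α.1 a).isSome}.Finite :=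
    Set.encard_ne_top_iff.1 (ne_top_of_le_ne_top (by simp) α.2)
  have hran : {b : ι | (α.1.symm b).isSome}.Finite :=
    Set.encard_ne_top_iff.1 (ne_top_of_le_ne_top (by simp) (inv α).2)
  set G : Elem ι n → Set (ι × ι) := fun g => {p | g.1 p.1 = some p.2} with hG
  have himg : G '' S ⊆ {t | t ⊆ {a : ι | (α.1 a).isSome} ×ˢ {b : ι | (α.1.symm b).isSome}} := by
    rintro t ⟨g, hg, rfl⟩ p hp
    exact hg p.1 p.2 hp
  have hfin : (G '' S).Finite := ((hdom.prod hran).finite_subsets).subset himg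
  refine Set.Finite.of_finite_image hfin ?_
  intro g _ h _ hgh
  apply Subtype.ext; apply PEquiv.ext; intro a
  cases hga : g.1 a with
  | some b =>
      have h2 : (a, b) ∈ G h := hgh ▸ hga
      exact (show h.1 a = some b from h2).symm
  | none =>
      cases hha : h.1 a with
      | none => rfl
      | some b =>
          have h2 : (a, b) ∈ G g := hgh ▸ hha
          have h3 : g.1 a = some b := h2
          rw [hga] at h3
          cases h3

lemma clopen_T_fiber [TopologicalSpace (Elem ι n)] [T1Space (Elem ι n)]
    (hshift : ShiftContinuous ι n) (α : Elem ι n) :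
    IsClopen {x : Elem ι n | (α * inv α) * x * (inv α * α) = α} := by
  set T : Elem ι n → Elem ι n := fun x => (α * inv α) * x * (inv α * α) with hTdef
  have hT : Continuous T :=
    ((hshift (inv α * α)).2).comp ((hshift (α * inv α)).1)
  have hrange : ∀ x, T x ∈ {g : Elem ι n | ∀ a b, g.1 a = some b →
      (α.1 a).isSome ∧ (α.1.symm b).isSome} := by
    intro x a b hab
    have := (T_spec α x a b).1 hab
    exact ⟨this.1, this.2.1⟩
  constructor
  · have : {x : Elem ι n | T x = α} = T ⁻¹' {α} := rfl
    rw [this]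
    exact isClosed_singleton.preimage hT
  · have hfin : ({g : Elem ι n | ∀ a b, g.1 a = some b →
        (α.1 a).isSome ∧ (α.1.symm b).isSome} \ {α}).Finite :=
      (finite_fiberset α).diff
    have heq : {x : Elem ι n | T x = α} =
        T ⁻¹' ({g : Elem ι n | ∀ a b, g.1 a = some b →
          (α.1 a).isSome ∧ (α.1.symm b).isSome} \ {α})ᶜ := by
      ext x
      simp only [Set.mem_setOf_eq, Set.mem_preimage, Set.mem_compl_iff, Set.mem_diff,
        Set.mem_singleton_iff, not_and, not_not]
      exact ⟨fun h _ => h, fun h => h (hrange x)⟩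
    rw [heq]
    exact (hfin.isClosed.isOpen_compl).preimage hT

end ISemi

theorem stmt7 (ι : Type*) [Infinite ι] (n : ℕ) (hn : 0 < n)
    [TopologicalSpace (ISemi.Elem ι n)] [T1Space (ISemi.Elem ι n)]
    (hshift : ISemi.ShiftContinuous ι n) :
    TotallyDisconnectedSpace (ISemi.Elem ι n) := by
  constructor
  intro t _ ht x hx y hy
  by_contra hne
  obtain ⟨C, hC, hxC, hyC⟩ : ∃ C : Set (ISemi.Elem ι n), IsClopen C ∧ x ∈ C ∧ y ∉ C := by
    by_cases h1 : (x * ISemi.inv x) * y * (ISemi.inv x * x) = x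
    · by_cases h2 : (y * ISemi.inv y) * x * (ISemi.inv y * y) = y
      · exact absurd (ISemi.eq_of_T x y h1 h2) hne
      · exact ⟨{z | (y * ISemi.inv y) * z * (ISemi.inv y * y) = y}ᶜ,
          (ISemi.clopen_T_fiber hshift y).compl, h2,
          not_not.2 (ISemi.T_fixed y)⟩
    · exact ⟨{z | (x * ISemi.inv x) * z * (ISemi.inv x * x) = x},
        ISemi.clopen_T_fiber hshift x, ISemi.T_fixed x, h1⟩
  obtain ⟨z, -, hz1, hz2⟩ := ht C Cᶜ hC.isOpen hC.compl.isOpen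
    (by simp) ⟨x, hx, hxC⟩ ⟨y, hy, hyC⟩
  exact hz2 hz1
end

section
/- Let n be a positive integer, λ an infinite cardinal, and τ a shift-continuous T₁ topology on I_λ^n. Then (I_λ^n, τ) is a scattered space: every non-empty subset has a point isolated in that subset. -/
open Set Topology

universe v

theorem stmt8 (ι : Type*) [Infinite ι] (n : ℕ) (hn : 0 < n)
    [TopologicalSpace (ISemi.Elem ι n)] [T1Space (ISemi.Elem ι n)]
    (hshift : ISemi.ShiftContinuous ι n) :
    ISemi.Scattered (ISemi.Elem ι n) := by
  classical
  intro S hS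
  -- rank-one elements
  have hone : (1 : ℕ∞) ≤ (n : ℕ∞) := by exact_mod_cast hn
  have hsing : ∀ c : ι, ({a : ι | ((PEquiv.single c c : ι ≃. ι) a).isSome}.encard ≤ (n : ℕ∞)) := by
    intro c
    have : {a : ι | ((PEquiv.single c c : ι ≃. ι) a).isSome} = {c} := by
      ext a
      simp only [Set.mem_setOf_eq, Set.mem_singleton_iff]
      constructor
      · intro h
        by_contra hne
        rw [PEquiv.single_apply_of_ne (Ne.symm hne)] at h
        simp at h
      · rintro rfl; simp [PEquiv.single_apply]
    rw [this, Set.encard_singleton]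
    exact hone
  let sg : ι → ISemi.Elem ι n := fun c => ⟨PEquiv.single c c, hsing c⟩
  -- choose an element of S of maximal rank
  have hfin : ∀ y : ISemi.Elem ι n, (ISemi.dom y).Finite := fun y =>
    Set.finite_of_encard_le_coe y.2
  let K : Set ℕ := {k | ∃ y ∈ S, (ISemi.dom y).encard = (k : ℕ∞)}
  have hKne : K.Nonempty := by
    obtain ⟨y₀, hy₀⟩ := hS
    exact ⟨(ISemi.dom y₀).encard.toNat, y₀, hy₀,
      (ENat.coe_toNat (hfin y₀).encard_lt_top.ne).symm⟩
  have hKbdd : BddAbove K := by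
    refine ⟨n, fun k hk => ?_⟩
    obtain ⟨y, _, hy⟩ := hk
    exact_mod_cast hy ▸ y.2
  obtain ⟨x, hxS, hxk⟩ := Nat.sSup_mem hKne hKbdd
  have hmax : ∀ y ∈ S, (ISemi.dom y).encard ≤ (ISemi.dom x).encard := by
    intro y hy
    have h1 : (ISemi.dom y).encard = (((ISemi.dom y).encard.toNat : ℕ) : ℕ∞) :=
      (ENat.coe_toNat (hfin y).encard_lt_top.ne).symm
    have h2 : (ISemi.dom y).encard.toNat ∈ K := ⟨y, hy, h1.symm ▸ rfl⟩
    rw [hxk, h1]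
    exact_mod_cast le_csSup hKbdd h2
  refine ⟨x, hxS, ?_⟩
  -- the open neighbourhood
  let Q : ι → ISemi.Elem ι n := fun a => (x.1 a).elim (ISemi.zero ι n) sg
  let W : ι → Set (ISemi.Elem ι n) :=
    fun a => (fun y => sg a * y * Q a) ⁻¹' {ISemi.zero ι n}ᶜ
  have hWopen : ∀ a, IsOpen (W a) := by
    intro a
    have hc : Continuous (fun y : ISemi.Elem ι n => sg a * y * Q a) :=
      (hshift (Q a)).2.comp (hshift (sg a)).1
    exact (isClosed_singleton.isOpen_compl).preimage hc
  -- value of the product map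
  have hval : ∀ (a b : ι) (y : ISemi.Elem ι n), x.1 a = some b →
      (y ∈ W a ↔ y.1 a = some b) := by
    intro a b y hab
    have hQ : Q a = sg b := by simp [Q, hab]
    have hmul : (sg a * y * Q a).1 = ((PEquiv.single a a).trans y.1).trans
        (PEquiv.single b b) := by rw [hQ]; rfl
    constructor
    · intro hy
      simp only [W, Set.mem_preimage, Set.mem_compl_iff, Set.mem_singleton_iff] at hy
      by_contra hne
      apply hy
      apply Subtype.ext
      apply PEquiv.ext
      intro c
      have hz : (ISemi.zero ι n).1 = (⊥ : ι ≃. ι) := rfl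
      rw [hmul, hz, PEquiv.bot_apply, Option.eq_none_iff_forall_not_mem]
      intro c'
      rw [PEquiv.mem_trans]
      rintro ⟨d, hd, hc'⟩
      rw [PEquiv.mem_trans] at hd
      obtain ⟨e, he, hd2⟩ := hd
      rw [PEquiv.mem_single_iff] at he hc'
      obtain ⟨rfl, rfl⟩ := he
      obtain ⟨rfl, rfl⟩ := hc'
      exact hne hd2
    · intro hy
      simp only [W, Set.mem_preimage, Set.mem_compl_iff, Set.mem_singleton_iff]
      intro h
      have hv : (sg a * y * Q a).1 a = some b := by
        rw [hmul, PEquiv.trans_eq_some]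
        refine ⟨b, ?_, PEquiv.single_apply b b⟩
        rw [PEquiv.trans_eq_some]
        exact ⟨a, PEquiv.single_apply a a, hy⟩
      rw [h] at hv
      have hz : (ISemi.zero ι n).1 = (⊥ : ι ≃. ι) := rfl
      rw [hz, PEquiv.bot_apply] at hv
      cases hv
  refine ⟨⋂ a ∈ ISemi.dom x, W a, (hfin x).isOpen_biInter (fun a _ => hWopen a), ?_⟩
  apply Set.eq_singleton_iff_unique_mem.mpr
  constructor
  · refine ⟨Set.mem_iInter₂.mpr (fun a ha => ?_), hxS⟩
    obtain ⟨b, hb⟩ := Option.isSome_iff_exists.1 ha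
    exact (hval a b x hb).mpr hb
  · rintro y ⟨hyU, hyS⟩
    have hagree : ∀ a ∈ ISemi.dom x, y.1 a = x.1 a := by
      intro a ha
      obtain ⟨b, hb⟩ := Option.isSome_iff_exists.1 ha
      rw [hb]
      exact (hval a b y hb).mp (Set.mem_iInter₂.mp hyU a ha)
    have hsub : ISemi.dom x ⊆ ISemi.dom y := by
      intro a ha
      have := hagree a ha
      simp only [ISemi.dom, Set.mem_setOf_eq] at *
      rw [this]; exact ha
    have hdomeq : ISemi.dom x = ISemi.dom y :=
      (hfin x).eq_of_subset_of_encard_le hsub (hmax y hyS)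
    apply Subtype.ext
    apply PEquiv.ext
    intro c
    rcases Classical.em (c ∈ ISemi.dom x) with hc | hc
    · exact hagree c hc
    · have hcy : c ∉ ISemi.dom y := hdomeq ▸ hc
      simp only [ISemi.dom, Set.mem_setOf_eq, Option.isSome_iff_exists, not_exists] at hc hcy
      rcases hx : x.1 c with _ | v
      · rcases hy : y.1 c with _ | w
        · rfl
        · exact absurd hy (by simpa using hcy w)
      · exact absurd hx (by simpa using hc v)
end
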